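/- arXiv:2307.01303 — 2 statements merged into one kernel-verified Lean document; each statement's English description precedes it below -/
import Mathlib

section
/- Let K be an algebraically closed field of characteristic zero and let R be a nonzero finitely generated commutative K-algebra having exactly one prime ideal. Let p be a prime number and n ≥ 1. Then: (a) the map u ↦ u^{p^n} on the unit group R^× is surjective; and (b) its kernel is exactly the image under the structure map K → R of the group μ_{p^n}(K) = {c ∈ K : c^{p^n} = 1} of p^n-th roots of unity of K. In other words, there is a short exact sequence 1 → μ_{p^n}(K) → R^× → R^× → 1 where the last map is raising to the p^n-th power. -/
private lemma aux_one_add_pow {R : Type*} [CommRing R] (m : ℕ) (x : R) :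
    ∃ s : R, (1 + x) ^ (m + 1) = 1 + (m + 1) * x + x ^ 2 * s := by
  induction m with
  | zero => exact ⟨0, by ring⟩
  | succ m ih =>
    obtain ⟨s, hs⟩ := ih
    refine ⟨s + (m + 1) + s * x, ?_⟩
    rw [pow_succ, hs]
    push_cast
    ring

/-- torsion-freeness of `1 + nilradical` when `m+1` is invertible -/
private lemma aux_torsion {R : Type*} [CommRing R] (m : ℕ) (hm : IsUnit ((m : R) + 1))
    {x : R} (hx : IsNilpotent x) (h : (1 + x) ^ (m + 1) = 1) : x = 0 := by
  obtain ⟨s, hs⟩ := aux_one_add_pow m x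
  have h0 : x * (((m : R) + 1) + x * s) = 0 := by
    have h' := hs.symm.trans h
    linear_combination h'
  have hu : IsUnit (((m : R) + 1) + x * s) := by
    have hns : IsNilpotent (x * s) := (Commute.all x s).isNilpotent_mul_right hx
    exact hns.isUnit_add_left_of_commute hm (Commute.all _ _)
  obtain ⟨v, hv⟩ := hu
  calc x = x * (↑v * ↑v⁻¹) := by rw [Units.mul_inv, mul_one]
  _ = x * (((m : R) + 1) + x * s) * ↑v⁻¹ := by rw [hv]; ring
  _ = 0 := by rw [h0, zero_mul]

/-- existence of `(m+1)`-st roots of `1 + nilpotent` when `m+1` is invertible -/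
private lemma aux_root {R : Type*} [CommRing R] [Nontrivial R] (m : ℕ) (a : R)
    (ha : ((m : R) + 1) * a = 1) :
    ∀ k : ℕ, ∀ x : R, x ^ k = 0 → ∃ y : R, (1 + y) ^ (m + 1) = 1 + x := by
  intro k
  induction k using Nat.strong_induction_on with
  | _ k ih =>
    intro x hx
    match k, hx with
    | 0, hx => rw [pow_zero] at hx; exact absurd hx one_ne_zero
    | 1, hx => exact ⟨0, by rw [pow_one] at hx; simp [hx]⟩
    | (k + 2), hx =>
      obtain ⟨s, hs⟩ := aux_one_add_pow m (a * x)
      have hxnil : IsNilpotent x := ⟨k + 2, hx⟩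
      have h1 : (1 + a * x) ^ (m + 1) = 1 + x + x ^ 2 * (a ^ 2 * s) := by
        linear_combination hs + x * ha
      obtain ⟨U, hU⟩ := hxnil.isUnit_one_add
      set c : R := ↑U⁻¹ * (a ^ 2 * s) with hc
      set w : R := x ^ 2 * c with hwdef
      have hw : w ^ (k + 1) = 0 := by
        rw [hwdef, mul_pow, ← pow_mul, show 2 * (k + 1) = (k + 2) + k by ring,
          pow_add, hx, zero_mul, zero_mul]
      have h2 : (1 + x) * (1 + w) = 1 + x + x ^ 2 * (a ^ 2 * s) := by
        have hUi : (1 + x) * ↑U⁻¹ = 1 := by rw [← hU, Units.mul_inv]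
        calc (1 + x) * (1 + w) = (1 + x) + ((1 + x) * ↑U⁻¹) * (x ^ 2 * (a ^ 2 * s)) := by
              rw [hwdef, hc]; ring
        _ = 1 + x + x ^ 2 * (a ^ 2 * s) := by rw [hUi, one_mul]
      obtain ⟨t, ht⟩ := ih (k + 1) (by omega) w hw
      have key : (1 + x) * (1 + t) ^ (m + 1) = (1 + a * x) ^ (m + 1) := by
        rw [ht, h2, h1]
      have hwu : IsUnit (1 + w) := IsNilpotent.isUnit_one_add ⟨k + 1, hw⟩
      have htu : IsUnit (1 + t) := by
        refine isUnit_of_mul_isUnit_left (y := (1 + t) ^ m) ?_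
        rw [← pow_succ', ht]; exact hwu
      obtain ⟨V, hV⟩ := htu
      refine ⟨(1 + a * x) * ↑V⁻¹ - 1, ?_⟩
      have hVi : (1 + t) * (↑V⁻¹ : R) = 1 := by rw [← hV, Units.mul_inv]
      calc (1 + ((1 + a * x) * ↑V⁻¹ - 1)) ^ (m + 1)
          = (1 + a * x) ^ (m + 1) * ((↑V⁻¹ : R)) ^ (m + 1) := by
            rw [add_sub_cancel, mul_pow]
      _ = (1 + x) * ((1 + t) * (↑V⁻¹ : R)) ^ (m + 1) := by
            rw [mul_pow, ← mul_assoc, key]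
      _ = 1 + x := by rw [hVi, one_pow, mul_one]

/-- Let `K` be an algebraically closed field of characteristic zero and
`R` a nonzero finitely generated commutative `K`-algebra with exactly one prime ideal,
`p` a prime and `n ≥ 1`. Then `u ↦ u ^ (p ^ n)` is surjective on `Rˣ`, and its kernel is
exactly the image of the group `μ_{p^n}(K)` of `p^n`-th roots of unity of `K`; i.e.,
`1 → μ_{p^n}(K) → Rˣ → Rˣ → 1` is exact with last map the `p^n`-th power map. -/
theorem stmt4 (K R : Type*) [Field K] [IsAlgClosed K] [CharZero K] [CommRing R]
    [Nontrivial R] [Algebra K R] [Algebra.FiniteType K R]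
    (hone : ∃! P : Ideal R, P.IsPrime)
    (p : ℕ) (hp : p.Prime) (n : ℕ) (hn : 1 ≤ n) :
    (∀ u : Rˣ, ∃ v : Rˣ, v ^ p ^ n = u) ∧
    (∀ u : Rˣ, u ^ p ^ n = 1 ↔ ∃ c : K, c ^ p ^ n = 1 ∧ (u : R) = algebraMap K R c) := by
  obtain ⟨P, hP, huniq⟩ := hone
  -- P is maximal
  have hPmax : P.IsMaximal := by
    obtain ⟨M, hM⟩ := Ideal.exists_maximal R
    have : M = P := huniq M hM.isPrime
    rwa [← this]
  -- every element of P is nilpotent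
  have hPnil : ∀ x ∈ P, IsNilpotent x := by
    intro x hxP
    rw [← mem_nilradical]
    have : P ≤ nilradical R := by
      rw [nilradical_eq_sInf]
      exact le_sInf fun J hJ => le_of_eq (huniq J hJ).symm
    exact this hxP
  haveI := hP
  have hnilP : ∀ x : R, IsNilpotent x → x ∈ P :=
    fun x hx => nilradical_le_prime P (mem_nilradical.2 hx)
  -- residue field
  haveI := hPmax
  have hsurj : Function.Surjective (algebraMap K (R ⧸ P)) := by
    letI : Field (R ⧸ P) := Ideal.Quotient.field P
    haveI : Algebra.FiniteType K (R ⧸ P) :=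
      Algebra.FiniteType.of_surjective (Ideal.Quotient.mkₐ K P)
        (Ideal.Quotient.mkₐ_surjective K P)
    haveI : Module.Finite K (R ⧸ P) := finite_of_finite_type_of_isJacobsonRing K (R ⧸ P)
    haveI : Algebra.IsIntegral K (R ⧸ P) := Algebra.IsIntegral.of_finite K (R ⧸ P)
    exact IsAlgClosed.algebraMap_bijective_of_isIntegral.2
  have hqalg : ∀ c : K, Ideal.Quotient.mk P (algebraMap K R c) = algebraMap K (R ⧸ P) c := by
    intro c
    rw [← Ideal.Quotient.algebraMap_eq, ← IsScalarTower.algebraMap_apply]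
  -- m := p ^ n, with m = m' + 1
  set m : ℕ := p ^ n with hm
  have hmpos : 0 < m := pow_pos hp.pos n
  obtain ⟨m', hm'⟩ : ∃ m', m = m' + 1 := ⟨m - 1, (Nat.succ_pred_eq_of_pos hmpos).symm⟩
  -- m is invertible in R
  have hmK : ((m' : K) + 1) ≠ 0 := by
    exact_mod_cast Nat.cast_add_one_ne_zero (R := K) m'
  set a : R := algebraMap K R (((m' : K) + 1)⁻¹) with hadef
  have ha : ((m' : R) + 1) * a = 1 := by
    rw [hadef, show ((m' : R) + 1) = algebraMap K R ((m' : K) + 1) by push_cast; simp,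
      ← map_mul, mul_inv_cancel₀ hmK, map_one]
  have hmunit : IsUnit ((m' : R) + 1) := IsUnit.of_mul_eq_one _ ha
  -- injectivity of algebraMap K R
  have hinj : Function.Injective (algebraMap K R) := (algebraMap K R).injective
  -- key decomposition of units
  have key : ∀ u : Rˣ, ∃ c : K, c ≠ 0 ∧ ∃ x : R, IsNilpotent x ∧
      (u : R) = algebraMap K R c * (1 + x) := by
    intro u
    obtain ⟨c, hc⟩ := hsurj (Ideal.Quotient.mk P (u : R))
    have hmem : (u : R) - algebraMap K R c ∈ P := by
      rw [← Ideal.Quotient.eq_zero_iff_mem, map_sub, hqalg, hc, sub_self]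
    have hx0 : IsNilpotent ((u : R) - algebraMap K R c) := hPnil _ hmem
    have hc0 : c ≠ 0 := by
      rintro rfl
      rw [map_zero, sub_zero] at hx0
      obtain ⟨j, hj⟩ := hx0
      have : IsUnit ((u : R) ^ j) := (u.isUnit).pow j
      rw [hj, isUnit_zero_iff] at this
      exact zero_ne_one this
    refine ⟨c, hc0, algebraMap K R c⁻¹ * ((u : R) - algebraMap K R c), ?_, ?_⟩
    · exact (Commute.all _ _).isNilpotent_mul_left hx0
    · have : algebraMap K R c * algebraMap K R c⁻¹ = 1 := by
        rw [← map_mul, mul_inv_cancel₀ hc0, map_one]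
      calc (u : R) = algebraMap K R c + (algebraMap K R c * algebraMap K R c⁻¹) *
            ((u : R) - algebraMap K R c) := by rw [this]; ring
      _ = algebraMap K R c * (1 + algebraMap K R c⁻¹ * ((u : R) - algebraMap K R c)) := by ring
  constructor
  · -- surjectivity
    intro u
    obtain ⟨c, hc0, x, hxnil, hux⟩ := key u
    obtain ⟨d, hd⟩ := IsAlgClosed.exists_pow_nat_eq c hmpos
    obtain ⟨k, hk⟩ := hxnil
    obtain ⟨y, hy⟩ := aux_root m' a ha k x hk
    have hw : (algebraMap K R d * (1 + y)) ^ m = (u : R) := by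
      rw [mul_pow, hm', hy, ← hm', ← map_pow, hd, hux]
    have hwu : IsUnit (algebraMap K R d * (1 + y)) := by
      refine isUnit_of_mul_isUnit_left (y := (algebraMap K R d * (1 + y)) ^ (m - 1)) ?_
      rw [← pow_succ', show m - 1 + 1 = m from Nat.succ_pred_eq_of_pos hmpos, hw]
      exact u.isUnit
    refine ⟨hwu.unit, ?_⟩
    ext
    rw [Units.val_pow_eq_pow_val, IsUnit.unit_spec, hw]
  · -- kernel
    intro u
    constructor
    · intro hu
      obtain ⟨c, hc0, x, hxnil, hux⟩ := key u
      have huR : (u : R) ^ m = 1 := by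
        rw [← Units.val_pow_eq_pow_val, hu, Units.val_one]
      have hq1 : Ideal.Quotient.mk P ((u : R)) = algebraMap K (R ⧸ P) c := by
        rw [hux, map_mul, map_add, map_one, Ideal.Quotient.eq_zero_iff_mem.2 (hnilP x hxnil),
          add_zero, mul_one, hqalg]
      have hcm : c ^ m = 1 := by
        have : algebraMap K (R ⧸ P) (c ^ m) = algebraMap K (R ⧸ P) 1 := by
          rw [map_pow, ← hq1, map_one, ← map_pow, huR, map_one]
        exact (algebraMap K (R ⧸ P)).injective this
      have hone : (1 + x) ^ m = 1 := by
        have h1 : algebraMap K R c ^ m * (1 + x) ^ m = 1 := by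
          rw [← mul_pow, ← hux, huR]
        rw [← map_pow, hcm, map_one, one_mul] at h1
        exact h1
      have hx0 : x = 0 := aux_torsion m' hmunit hxnil (by rw [← hm']; exact hone)
      exact ⟨c, hcm, by rw [hux, hx0, add_zero, mul_one]⟩
    · rintro ⟨c, hcm, huc⟩
      ext
      rw [Units.val_pow_eq_pow_val, huc, ← map_pow, hcm, map_one, Units.val_one]
end

section
/- Let K be an algebraically closed field of characteristic zero, let R and S be nonzero finitely generated commutative K-algebras each having exactly one prime ideal, let φ : R → S be a K-algebra homomorphism, let p be a prime number and n ≥ 0. Then the map from R^× to the set {(r, s) ∈ R^× × S^× : φ(r) = s^{p^n}} sending u ↦ (u^{p^n}, φ(u)) is a bijection. (Equivalently, the commutative square whose horizontal maps are the p^n-th power maps on R^× and on S^× and whose vertical maps are induced by φ is a pullback square of abelian groups.) -/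
section Aux

variable {A : Type*} [CommRing A]

private lemma binom_aux (m : ℕ) (a d : A) :
    ∃ c : A, (a + d) ^ (m + 1) = a ^ (m + 1) + ((m : A) + 1) * a ^ m * d + d ^ 2 * c := by
  induction m with
  | zero => exact ⟨0, by ring⟩
  | succ m ih =>
    obtain ⟨c, hc⟩ := ih
    refine ⟨a * c + ((m : A) + 1) * a ^ m + d * c, ?_⟩
    have h : (a + d) ^ (m + 1 + 1) = (a + d) * (a + d) ^ (m + 1) := by ring
    rw [h, hc]
    push_cast
    ring

private lemma torsion_aux {m : ℕ} (hm : IsUnit ((m : A) + 1)) {x : A}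
    (hx : IsNilpotent x) (h : (1 + x) ^ (m + 1) = 1) : x = 0 := by
  obtain ⟨c, hc⟩ := binom_aux m 1 x
  rw [h] at hc
  have hx2 : x * (((m : A) + 1) + x * c) = 0 := by linear_combination -hc
  have hu : IsUnit (((m : A) + 1) + x * c) :=
    ((Commute.all _ _).isNilpotent_mul_right hx).isUnit_add_left_of_commute hm (Commute.all _ _)
  exact (hu.mul_left_eq_zero).mp hx2

private lemma root_aux {m : ℕ} (hm : IsUnit ((m : A) + 1)) {x : A}
    (hx : IsNilpotent x) : ∃ y : A, IsNilpotent y ∧ (1 + y) ^ (m + 1) = 1 + x := by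
  obtain ⟨N, hN⟩ := hx
  have hxnil : IsNilpotent x := ⟨N, hN⟩
  have key : ∀ j : ℕ, ∃ y t : A, IsNilpotent y ∧
      (1 + y) ^ (m + 1) = 1 + x + x ^ (j + 1) * t := by
    intro j
    induction j with
    | zero => exact ⟨0, -1, IsNilpotent.zero, by ring⟩
    | succ j ih =>
      obtain ⟨y, t, hy, hyt⟩ := ih
      have hxp : IsNilpotent (x ^ (j + 1)) := hxnil.pow_of_pos (Nat.succ_ne_zero j)
      have h1y : IsUnit (1 + y) := hy.isUnit_one_add
      have hw : IsUnit (((m : A) + 1) * (1 + y) ^ m) := hm.mul (h1y.pow m)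
      obtain ⟨w, hwv⟩ := hw
      set d : A := -(x ^ (j + 1) * t) * ↑w⁻¹ with hd
      have hdnil : IsNilpotent d :=
        ((Commute.all _ _).isNilpotent_mul_right ((Commute.all _ _).isNilpotent_mul_right hxp).neg)
      obtain ⟨c, hc⟩ := binom_aux m (1 + y) d
      have hww : (w : A) * ↑w⁻¹ = 1 := w.mul_inv
      refine ⟨y + d, x ^ j * (t * ↑w⁻¹) ^ 2 * c, (Commute.all _ _).isNilpotent_add hy hdnil, ?_⟩
      have h2 : (1 : A) + (y + d) = (1 + y) + d := by ring
      rw [h2, hc, hyt, hd, ← hwv]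
      linear_combination (-(x ^ (j + 1) * t)) * hww
  obtain ⟨y, t, hy, hyt⟩ := key N
  refine ⟨y, hy, ?_⟩
  rw [hyt, pow_succ, hN]
  ring

private lemma scalar_aux {K A : Type*} [Field K] [IsAlgClosed K] [CommRing A] [Nontrivial A]
    [Algebra K A] [Algebra.FiniteType K A] (hone : ∃! P : Ideal A, P.IsPrime) (u : Aˣ) :
    ∃ c : K, c ≠ 0 ∧ ∃ x : A, IsNilpotent x ∧ (u : A) = algebraMap K A c * (1 + x) ∧
      ∀ k : ℕ, (u : A) ^ k = 1 → c ^ k = 1 := by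
  obtain ⟨P, hPp, hPuniq⟩ := hone
  obtain ⟨M, hM⟩ := Ideal.exists_maximal A
  obtain rfl : M = P := hPuniq M hM.isPrime
  haveI : M.IsMaximal := hM
  letI : Field (A ⧸ M) := Ideal.Quotient.field M
  haveI : Algebra.FiniteType K (A ⧸ M) :=
    Algebra.FiniteType.of_surjective (Ideal.Quotient.mkₐ K M)
      (Ideal.Quotient.mkₐ_surjective K M)
  haveI : Module.Finite K (A ⧸ M) := finite_of_finite_type_of_isJacobsonRing K (A ⧸ M)
  have hsurj : Function.Surjective (algebraMap K (A ⧸ M)) :=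
    IsAlgClosed.algebraMap_bijective_of_isIntegral.2
  obtain ⟨c, hc⟩ := hsurj (Ideal.Quotient.mk M (u : A))
  have hnilrad : nilradical A = M := by
    rw [nilradical_eq_sInf]
    have hset : {J : Ideal A | J.IsPrime} = {M} :=
      Set.eq_singleton_iff_unique_mem.mpr ⟨hPp, hPuniq⟩
    rw [hset, sInf_singleton]
  have hinj : Function.Injective (algebraMap K (A ⧸ M)) := (algebraMap K (A ⧸ M)).injective
  have hc0 : c ≠ 0 := by
    rintro rfl
    rw [map_zero] at hc
    have hmem : (u : A) ∈ M := Ideal.Quotient.eq_zero_iff_mem.mp hc.symm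
    exact hM.ne_top (M.eq_top_of_isUnit_mem hmem u.isUnit)
  have hnil : IsNilpotent ((u : A) - algebraMap K A c) := by
    rw [← mem_nilradical, hnilrad, ← Ideal.Quotient.eq_zero_iff_mem, map_sub,
      Ideal.Quotient.mk_algebraMap, hc, sub_self]
  have hE : IsUnit (algebraMap K A c) := (isUnit_iff_ne_zero.mpr hc0).map (algebraMap K A)
  obtain ⟨E, hEv⟩ := hE
  refine ⟨c, hc0, ↑E⁻¹ * ((u : A) - algebraMap K A c),
    (Commute.all _ _).isNilpotent_mul_left hnil, ?_, ?_⟩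
  · have hE1 : (E : A) * ↑E⁻¹ = 1 := E.mul_inv
    rw [← hEv]
    linear_combination ((E : A) - (u : A)) * hE1
  · intro k hk
    apply hinj
    rw [map_pow, hc, ← map_pow, hk, map_one, map_one]

variable {K : Type*} [Field K] [IsAlgClosed K] [CharZero K]

private lemma natunit_aux {A : Type*} [CommRing A] [Algebra K A] (m : ℕ) :
    IsUnit ((m : A) + 1) := by
  have h : ((m : K) + 1) ≠ 0 := by
    have h0 : ((m + 1 : ℕ) : K) ≠ 0 := Nat.cast_ne_zero.mpr (Nat.succ_ne_zero m)
    push_cast at h0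
    exact h0
  have h2 := (isUnit_iff_ne_zero.mpr h).map (algebraMap K A)
  rwa [map_add, map_natCast, map_one] at h2

/-- Surjectivity of the `(m+1)`-st power map on units. -/
private lemma powsurj_aux {A : Type*} [CommRing A] [Nontrivial A] [Algebra K A]
    [Algebra.FiniteType K A] (hone : ∃! P : Ideal A, P.IsPrime) (m : ℕ) (r : Aˣ) :
    ∃ u : Aˣ, u ^ (m + 1) = r := by
  obtain ⟨c, hc0, x, hxnil, hrx, -⟩ := scalar_aux (K := K) hone r
  obtain ⟨d, hd⟩ := IsAlgClosed.exists_pow_nat_eq c (Nat.succ_pos m)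
  obtain ⟨y, hynil, hy⟩ := root_aux (natunit_aux (K := K) m) hxnil
  set v : A := algebraMap K A d * (1 + y) with hv
  have hvm : v ^ (m + 1) = (r : A) := by
    rw [hv, mul_pow, ← map_pow, hd, hy, hrx]
  have hvu : IsUnit v :=
    isUnit_of_dvd_unit (dvd_pow_self v (Nat.succ_ne_zero m)) (hvm ▸ r.isUnit)
  obtain ⟨U, hU⟩ := hvu
  refine ⟨U, Units.ext ?_⟩
  rw [Units.val_pow_eq_pow_val, hU, hvm]

/-- Kernel of the `(m+1)`-st power map on units consists of scalars. -/
private lemma powker_aux {A : Type*} [CommRing A] [Nontrivial A] [Algebra K A]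
    [Algebra.FiniteType K A] (hone : ∃! P : Ideal A, P.IsPrime) (m : ℕ) (w : Aˣ)
    (h : w ^ (m + 1) = 1) : ∃ c : K, c ^ (m + 1) = 1 ∧ (w : A) = algebraMap K A c := by
  obtain ⟨c, hc0, x, hxnil, hwx, hck⟩ := scalar_aux (K := K) hone w
  have hw1 : (w : A) ^ (m + 1) = 1 := by
    rw [← Units.val_pow_eq_pow_val, h, Units.val_one]
  have hcm : c ^ (m + 1) = 1 := hck _ hw1
  have h1x : (1 + x) ^ (m + 1) = 1 := by
    have he : (algebraMap K A c) ^ (m + 1) = 1 := by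
      rw [← map_pow, hcm, map_one]
    calc (1 + x) ^ (m + 1) = (algebraMap K A c) ^ (m + 1) * (1 + x) ^ (m + 1) := by
          rw [he, one_mul]
      _ = ((w : A)) ^ (m + 1) := by rw [← mul_pow, ← hwx]
      _ = 1 := hw1
  have hx0 : x = 0 := torsion_aux (natunit_aux (K := K) m) hxnil h1x
  exact ⟨c, hcm, by rw [hwx, hx0, add_zero, mul_one]⟩

end Aux

/-- Let `K` be an algebraically closed field of characteristic zero,
`R`, `S` nonzero finitely generated commutative `K`-algebras each with exactly one prime
ideal, `φ : R →ₐ[K] S`, `p` a prime, `n ≥ 0`. Then `u ↦ (u ^ (p ^ n), φ(u))` is a bijection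
from `Rˣ` onto `{(r, s) : φ(r) = s ^ (p ^ n)}`: equivalently, the square formed by the
`p^n`-th power maps and the maps induced by `φ` on unit groups is a pullback square. -/
theorem stmt5 (K R S : Type*) [Field K] [IsAlgClosed K] [CharZero K]
    [CommRing R] [Nontrivial R] [Algebra K R] [Algebra.FiniteType K R]
    [CommRing S] [Nontrivial S] [Algebra K S] [Algebra.FiniteType K S]
    (honeR : ∃! P : Ideal R, P.IsPrime) (honeS : ∃! Q : Ideal S, Q.IsPrime)
    (φ : R →ₐ[K] S) (p : ℕ) (hp : p.Prime) (n : ℕ) :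
    Function.Injective (fun u : Rˣ => (u ^ p ^ n, Units.map (φ : R →* S) u)) ∧
    Set.range (fun u : Rˣ => (u ^ p ^ n, Units.map (φ : R →* S) u)) =
      {rs : Rˣ × Sˣ | Units.map (φ : R →* S) rs.1 = rs.2 ^ p ^ n} := by
  obtain ⟨m, hmeq⟩ : ∃ m : ℕ, p ^ n = m + 1 :=
    ⟨p ^ n - 1, (Nat.succ_pred_eq_of_pos (pow_pos hp.pos n)).symm⟩
  rw [hmeq]
  constructor
  · -- injectivity
    intro u v huv
    have h1 : u ^ (m + 1) = v ^ (m + 1) := congrArg Prod.fst huv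
    have h2 : Units.map (φ : R →* S) u = Units.map (φ : R →* S) v := congrArg Prod.snd huv
    have hw : (u * v⁻¹) ^ (m + 1) = 1 := by
      rw [mul_pow, inv_pow, h1, mul_inv_cancel]
    obtain ⟨c, hcm, hwc⟩ := powker_aux (K := K) honeR m (u * v⁻¹) hw
    have hφw : Units.map (φ : R →* S) (u * v⁻¹) = 1 := by
      rw [map_mul, map_inv, h2, mul_inv_cancel]
    have hval : φ ((u * v⁻¹ : Rˣ) : R) = 1 := by
      have := congrArg Units.val hφw
      simpa using this
    have hcs : algebraMap K S c = 1 := by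
      rw [hwc] at hval
      rwa [AlgHom.commutes] at hval
    have hc1 : c = 1 := by
      apply (algebraMap K S).injective
      rw [hcs, map_one]
    have hw1 : u * v⁻¹ = 1 := Units.ext (by rw [hwc, hc1, map_one, Units.val_one])
    exact mul_inv_eq_one.mp hw1
  · -- range
    ext rs
    constructor
    · rintro ⟨u, rfl⟩
      simp only [Set.mem_setOf_eq]
      rw [← map_pow]
    · rintro hrs
      obtain ⟨r, s⟩ := rs
      simp only [Set.mem_setOf_eq] at hrs
      obtain ⟨u₀, hu₀⟩ := powsurj_aux (K := K) honeR m r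
      have hs : (s * (Units.map (φ : R →* S) u₀)⁻¹) ^ (m + 1) = 1 := by
        rw [mul_pow, inv_pow, ← map_pow, hu₀, ← hrs, mul_inv_cancel]
      obtain ⟨c, hcm, hwc⟩ := powker_aux (K := K) honeS m _ hs
      have hc0 : c ≠ 0 := by
        rintro rfl
        rw [zero_pow (Nat.succ_ne_zero m)] at hcm
        exact zero_ne_one hcm
      have hcu : IsUnit (algebraMap K R c) := (isUnit_iff_ne_zero.mpr hc0).map (algebraMap K R)
      obtain ⟨C, hC⟩ := hcu
      refine ⟨C * u₀, ?_⟩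
      have hCm : C ^ (m + 1) = 1 := by
        apply Units.ext
        rw [Units.val_pow_eq_pow_val, hC, ← map_pow, hcm, map_one, Units.val_one]
      have hφC : Units.map (φ : R →* S) C = s * (Units.map (φ : R →* S) u₀)⁻¹ := by
        apply Units.ext
        have h3 : ((Units.map (φ : R →* S) C : Sˣ) : S) = φ (C : R) := rfl
        rw [h3, hC, AlgHom.commutes]
        exact hwc.symm
      have h1 : (C * u₀) ^ (m + 1) = r := by
        rw [mul_pow, hCm, one_mul, hu₀]
      have h2 : Units.map (φ : R →* S) (C * u₀) = s := by
        rw [map_mul, hφC, inv_mul_cancel_right]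
      rw [Prod.mk.injEq]
      exact ⟨h1, h2⟩
end
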